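/- arXiv:2405.05527 — 2 statements merged into one kernel-verified Lean document; each statement's English description precedes it below -/
import Mathlib

section
/- An element w of a Coxeter group is a product of pairwise distinct simple reflections if and only if ℓ(w) = |supp(w)|, where supp(w) is the set of simple reflections appearing in any reduced word of w. -/
namespace Paper
open List Real

set_option linter.unusedSectionVars false

variable {B : Type*} [DecidableEq B]

/-! ### The geometric representation, used to prove injectivity of `cs.simple`. -/

noncomputable def kk (M : CoxeterMatrix B) (a b : B) : ℝ :=
  if M a b = 0 then -1 else -Real.cos (Real.pi / M a b)

theorem kk_symm (M : CoxeterMatrix B) (a b : B) : kk M a b = kk M b a := by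
  unfold kk; rw [M.symmetric a b]

theorem kk_diag (M : CoxeterMatrix B) (a : B) : kk M a a = 1 := by
  unfold kk
  rw [M.diagonal a]
  norm_num

/-- The linear functional `v ↦ ⟨v, αₐ⟩`. -/
noncomputable def ff (M : CoxeterMatrix B) (a : B) : (B →₀ ℝ) →ₗ[ℝ] ℝ :=
  Finsupp.linearCombination ℝ (fun b => kk M b a)

theorem ff_single (M : CoxeterMatrix B) (a b : B) :
    ff M a (Finsupp.single b 1) = kk M b a := by
  simp [ff]

/-- The reflection `σₐ`. -/
noncomputable def sg (M : CoxeterMatrix B) (a : B) : Module.End ℝ (B →₀ ℝ) :=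
  LinearMap.id - LinearMap.smulRight ((2:ℝ) • ff M a) (Finsupp.single a 1)

theorem sg_apply (M : CoxeterMatrix B) (a : B) (v : B →₀ ℝ) :
    sg M a v = v - (2 * ff M a v) • Finsupp.single a 1 := by
  show v - (((2:ℝ) • ff M a) v) • _ = _
  rw [LinearMap.smul_apply, smul_eq_mul]

theorem sg_invol (M : CoxeterMatrix B) (a : B) : sg M a * sg M a = 1 := by
  apply LinearMap.ext
  intro v
  have h1 : ff M a (Finsupp.single a 1) = 1 := by rw [ff_single, kk_diag]
  show sg M a (sg M a v) = v
  rw [sg_apply, sg_apply, map_sub, map_smul, h1, smul_eq_mul, mul_one]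
  module


/-- The rotation-like map on coefficient pairs. -/
def qmap (c : ℝ) (p : ℝ × ℝ) : ℝ × ℝ :=
  ((4*c^2-1)*p.1 + 2*c*p.2, -(2*c)*p.1 - p.2)

theorem qmap_qmap (c : ℝ) (p : ℝ × ℝ) :
    qmap c (qmap c p) = ((4*c^2-2) * (qmap c p).1 - p.1, (4*c^2-2) * (qmap c p).2 - p.2) := by
  simp only [qmap, Prod.mk.injEq]
  constructor <;> ring

theorem qmap_iterate (c θ : ℝ) (hc : c = -Real.cos θ) (hS : Real.sin (2*θ) ≠ 0)
    (p : ℝ × ℝ) (n : ℕ) :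
    (qmap c)^[n] p =
      (Real.sin (2*n*θ)/Real.sin (2*θ) * (qmap c p).1
          - Real.sin (2*((n:ℝ)-1)*θ)/Real.sin (2*θ) * p.1,
       Real.sin (2*n*θ)/Real.sin (2*θ) * (qmap c p).2
          - Real.sin (2*((n:ℝ)-1)*θ)/Real.sin (2*θ) * p.2) := by
  induction n generalizing p with
  | zero =>
      simp only [Function.iterate_zero, id_eq, Nat.cast_zero]
      rw [show 2*((0:ℝ)-1)*θ = -(2*θ) by ring]
      rw [Real.sin_neg]
      field_simp
      ext <;> simp [hS]
  | succ n ih =>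
      rw [Function.iterate_succ_apply, ih (qmap c p), qmap_qmap]
      have hcc : Real.cos (2*θ) = 2*c^2 - 1 := by
        rw [Real.cos_two_mul, hc]; ring
      have e1 : Real.sin (2*((n:ℝ)+1)*θ) = Real.sin (2*n*θ) * (4*c^2-2) - Real.sin (2*((n:ℝ)-1)*θ) := by
        rw [show 2*((n:ℝ)+1)*θ = 2*n*θ + 2*θ by ring, show 2*((n:ℝ)-1)*θ = 2*n*θ - 2*θ by ring,
          Real.sin_add, Real.sin_sub, hcc]
        ring
      push_cast
      rw [e1]
      simp only [Prod.mk.injEq]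
      constructor <;> (field_simp; ring)

theorem qmap_iterate_id {c θ : ℝ} {m : ℕ} (hm : 2 ≤ m) (hθ : θ = Real.pi / m)
    (hc : c = -Real.cos θ) (p : ℝ × ℝ) :
    (qmap c)^[m] p = p := by
  rcases eq_or_lt_of_le hm with h2 | h3
  · -- m = 2 : c = 0
    have hc0 : c = 0 := by
      rw [hc, hθ, ← h2]
      norm_num [Real.cos_pi_div_two]
    subst hc0
    rw [← h2]
    show qmap 0 ((qmap 0)^[1] p) = p
    show qmap 0 (qmap 0 p) = p
    simp [qmap]
  · -- m ≥ 3
    have hm0 : (m:ℝ) ≠ 0 := by positivity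
    have hθpos : 0 < θ := by rw [hθ]; positivity
    have hm3 : (3:ℝ) ≤ (m:ℝ) := by exact_mod_cast h3
    have h2θ : 2*θ < Real.pi := by
      rw [hθ, mul_div_assoc', div_lt_iff₀ (by positivity : (0:ℝ) < (m:ℝ))]
      nlinarith [Real.pi_pos]
    have hS : Real.sin (2*θ) ≠ 0 :=
      ne_of_gt (Real.sin_pos_of_pos_of_lt_pi (by linarith) h2θ)
    rw [qmap_iterate c θ hc hS p m]
    have hmθ : (m:ℝ) * θ = Real.pi := by
      rw [hθ]; field_simp
    have e0 : Real.sin (2*m*θ) = 0 := by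
      rw [show 2*(m:ℝ)*θ = 2*((m:ℝ)*θ) by ring, hmθ, Real.sin_two_pi]
    have e1 : Real.sin (2*((m:ℝ)-1)*θ) = -Real.sin (2*θ) := by
      rw [show 2*((m:ℝ)-1)*θ = 2*((m:ℝ)*θ) - 2*θ by ring, hmθ, Real.sin_two_pi_sub]
    rw [e0, e1]
    field_simp
    ext <;> simp [hS]


end Paper

namespace Paper
open Real
set_option linter.unusedSectionVars false

section Dihedral

variable {B : Type*} [DecidableEq B] (M : CoxeterMatrix B) (i j : B)

theorem tau_apply (hij : i ≠ j) (x y : ℝ) (z : B →₀ ℝ)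
    (h1 : ff M i z = 0) (h2 : ff M j z = 0) :
    (sg M i * sg M j) (x • Finsupp.single i 1 + y • Finsupp.single j 1 + z) =
      (qmap (kk M i j) (x, y)).1 • Finsupp.single i 1
        + (qmap (kk M i j) (x, y)).2 • Finsupp.single j 1 + z := by
  have hii : ff M i (Finsupp.single i 1) = 1 := by rw [ff_single, kk_diag]
  have hjj : ff M j (Finsupp.single j 1) = 1 := by rw [ff_single, kk_diag]
  have hij1 : ff M j (Finsupp.single i 1) = kk M i j := ff_single M j i
  have hij2 : ff M i (Finsupp.single j 1) = kk M i j := by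
    rw [ff_single, kk_symm]
  set c := kk M i j with hc
  show sg M i (sg M j _) = _
  have E1 : sg M j (x • Finsupp.single i 1 + y • Finsupp.single j 1 + z)
      = x • Finsupp.single i 1 + (-(2*c)*x - y) • Finsupp.single j 1 + z := by
    rw [sg_apply]
    rw [show ff M j (x • Finsupp.single i 1 + y • Finsupp.single j 1 + z) = x * c + y by
      simp only [map_add, map_smul, smul_eq_mul, hij1, hjj, h2, add_zero, mul_one]]
    module
  rw [E1, sg_apply]
  rw [show ff M i (x • Finsupp.single i 1 + (-(2*c)*x - y) • Finsupp.single j 1 + z)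
      = x + (-(2*c)*x - y) * c by
    simp only [map_add, map_smul, smul_eq_mul, hii, hij2, h1, add_zero, mul_one]]
  show _ = ((4*c^2-1)*x + 2*c*y) • _ + (-(2*c)*x - y) • _ + z
  module

theorem tau_pow_apply (hij : i ≠ j) (n : ℕ) (x y : ℝ) (z : B →₀ ℝ)
    (h1 : ff M i z = 0) (h2 : ff M j z = 0) :
    ((sg M i * sg M j)^n) (x • Finsupp.single i 1 + y • Finsupp.single j 1 + z) =
      ((qmap (kk M i j))^[n] (x, y)).1 • Finsupp.single i 1
        + ((qmap (kk M i j))^[n] (x, y)).2 • Finsupp.single j 1 + z := by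
  induction n generalizing x y with
  | zero => simp
  | succ n ih =>
      have : ((sg M i * sg M j)^(n+1)) (x • Finsupp.single i 1 + y • Finsupp.single j 1 + z)
          = ((sg M i * sg M j)^n) ((sg M i * sg M j)
              (x • Finsupp.single i 1 + y • Finsupp.single j 1 + z)) := by
        rw [pow_succ]
        rfl
      rw [this, tau_apply M i j hij x y z h1 h2, ih (qmap (kk M i j) (x, y)).1 (qmap (kk M i j) (x, y)).2,
        Function.iterate_succ_apply]

theorem decomp (hij : i ≠ j) (hc : (kk M i j)^2 ≠ 1) (v : B →₀ ℝ) :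
    ∃ (x y : ℝ) (z : B →₀ ℝ), ff M i z = 0 ∧ ff M j z = 0
      ∧ v = x • Finsupp.single i 1 + y • Finsupp.single j 1 + z := by
  set c := kk M i j with hcdef
  have hii : ff M i (Finsupp.single i 1) = 1 := by rw [ff_single, kk_diag]
  have hjj : ff M j (Finsupp.single j 1) = 1 := by rw [ff_single, kk_diag]
  have hij1 : ff M j (Finsupp.single i 1) = c := ff_single M j i
  have hij2 : ff M i (Finsupp.single j 1) = c := by rw [ff_single, kk_symm]
  have hden : (1:ℝ) - c^2 ≠ 0 := by
    intro h
    apply hc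
    linarith
  refine ⟨(ff M i v - c * ff M j v)/(1-c^2), (ff M j v - c * ff M i v)/(1-c^2),
    v - ((ff M i v - c * ff M j v)/(1-c^2)) • Finsupp.single i 1
      - ((ff M j v - c * ff M i v)/(1-c^2)) • Finsupp.single j 1, ?_, ?_, ?_⟩
  · simp only [map_sub, map_smul, hii, hij2, smul_eq_mul]
    field_simp
    ring
  · simp only [map_sub, map_smul, hjj, hij1, smul_eq_mul]
    field_simp
    ring
  · module

theorem dihedral_rel (hij : i ≠ j) : (sg M i * sg M j) ^ (M i j) = 1 := by
  rcases Nat.eq_zero_or_pos (M i j) with h0 | hpos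
  · rw [h0, pow_zero]
  · have hm : 2 ≤ M i j := by
      have h1 := M.off_diagonal i j hij
      omega
    set m := M i j with hmdef
    set θ := Real.pi / m with hθ
    have hcos : kk M i j = -Real.cos θ := by
      unfold kk
      rw [if_neg (by omega)]
    have hc2 : (kk M i j)^2 ≠ 1 := by
      rw [hcos]
      have hθpos : 0 < θ := by rw [hθ]; positivity
      have hθlt : θ < Real.pi := by
        rw [hθ]
        apply div_lt_self Real.pi_pos
        exact_mod_cast by omega
      have hsin : 0 < Real.sin θ := Real.sin_pos_of_pos_of_lt_pi hθpos hθlt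
      have := Real.sin_sq_add_cos_sq θ
      nlinarith
    apply LinearMap.ext
    intro v
    obtain ⟨x, y, z, h1, h2, rfl⟩ := decomp M i j hij hc2 v
    show _ = (LinearMap.id : Module.End ℝ (B →₀ ℝ)) _
    rw [LinearMap.id_apply]
    rw [tau_pow_apply M i j hij m x y z h1 h2]
    rw [qmap_iterate_id hm hθ hcos (x, y)]

theorem sg_liftable : M.IsLiftable (sg M) := by
  intro a b
  rcases eq_or_ne a b with rfl | hab
  · rw [M.diagonal a, pow_one, sg_invol]
  · exact dihedral_rel M a b hab

end Dihedral

section Inj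

variable {B W : Type*} [DecidableEq B] [Group W] {M : CoxeterMatrix B}

theorem simple_injective (cs : CoxeterSystem M W) : Function.Injective cs.simple := by
  intro a b h
  by_contra hab
  have := congrArg (cs.lift ⟨sg M, sg_liftable M⟩) h
  rw [CoxeterSystem.lift_apply_simple, CoxeterSystem.lift_apply_simple] at this
  have h2 := congrArg (fun f : Module.End ℝ (B →₀ ℝ) => (f (Finsupp.single a 1)) a) this
  simp only [sg_apply] at h2
  rw [ff_single, kk_diag, ff_single, kk_symm, mul_one] at h2
  simp only [Finsupp.sub_apply, Finsupp.smul_apply, Finsupp.single_eq_same, smul_eq_mul] at h2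
  rw [Finsupp.single_eq_of_ne' (Ne.symm hab)] at h2
  norm_num at h2

end Inj

end Paper

namespace Paper
open List

variable {B W : Type*} [DecidableEq B] [Group W] {M : CoxeterMatrix B}

/-- `ω` is a reduced word for `w`. -/
def IsReducedWord (cs : CoxeterSystem M W) (w : W) (ω : List B) : Prop :=
  cs.wordProd ω = w ∧ ω.length = cs.length w

/-- The support of `w`: the set of (indices of) simple reflections appearing in some
reduced word of `w`. -/
def Supp (cs : CoxeterSystem M W) (w : W) : Set B :=
  {i | ∃ ω, IsReducedWord cs w ω ∧ i ∈ ω}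

/-- `w` is a product of pairwise distinct simple reflections. -/
def IsBoolean (cs : CoxeterSystem M W) (w : W) : Prop :=
  ∃ ω : List B, ω.Nodup ∧ cs.wordProd ω = w

/-- Bruhat order, characterized via the subword property. -/
def BruhatLE (cs : CoxeterSystem M W) (u w : W) : Prop :=
  ∃ ω ω' : List B, IsReducedWord cs w ω ∧ ω'.Sublist ω ∧ cs.wordProd ω' = u

/-- `s` occurs (strictly) before `t` in the list `ω`. -/
def PrecedesIn (ω : List B) (s t : B) : Prop :=
  ∃ i j : Fin ω.length, (i : ℕ) < (j : ℕ) ∧ ω.get i = s ∧ ω.get j = t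

end Paper


namespace Paper
open List

set_option linter.unusedSectionVars false
set_option linter.unusedVariables false

variable {B W : Type*} [DecidableEq B] [Group W] {M : CoxeterMatrix B} (cs : CoxeterSystem M W)

local prefix:100 "s" => cs.simple
local prefix:100 "π" => cs.wordProd
local prefix:100 "ℓ" => cs.length

open scoped Classical

/-- The permutation of `W × ZMod 2` attached to the generator `i`; used to track
the parity of the number of occurrences of each reflection in inversion sequences. -/
noncomputable def pe (i : B) : Function.End (W × ZMod 2) :=
  fun p => (s i * p.1 * s i, p.2 + if p.1 = s i then 1 else 0)

theorem pe_apply (i : B) (t : W) (ε : ZMod 2) :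
    pe cs i (t, ε) = (s i * t * s i, ε + if t = s i then 1 else 0) := rfl

theorem pe_mul_pow_apply (i j : B) (n : ℕ) (t : W) (ε : ZMod 2) :
    ((pe cs i * pe cs j)^n) (t, ε) =
      ((s i * s j)^n * t * ((s i * s j)^n)⁻¹,
       ε + ∑ k ∈ Finset.range (2*n), if t = s j * (s i * s j)^k then 1 else 0) := by
  set a := s i * s j with ha
  have hinv : a⁻¹ = s j * s i := by
    rw [ha, mul_inv_rev, cs.inv_simple, cs.inv_simple]
  have haconj4 : a⁻¹ * s j = s j * a := by
    rw [hinv, ha]; group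
  have h5 : a * s j * a = s j := by
    rw [ha]
    rw [show s i * s j * s j * (s i * s j) = s i * (s j * s j) * s i * s j by group]
    rw [cs.simple_mul_simple_self, mul_one, cs.simple_mul_simple_self, one_mul]
  have haconj5 : a * s j = s j * a⁻¹ := by
    have h6 := congrArg (fun x => x * a⁻¹) h5
    simp only [mul_assoc, mul_inv_cancel, mul_one] at h6
    simpa [mul_assoc] using h6
  induction n generalizing t ε with
  | zero =>
      simp only [pow_zero, Nat.mul_zero, Finset.range_zero, Finset.sum_empty, add_zero]
      show (t, ε) = _
      simp
  | succ n ih =>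
      have hstep : ((pe cs i * pe cs j)^(n+1)) (t, ε)
          = ((pe cs i * pe cs j)^n) ((pe cs i * pe cs j) (t, ε)) := by
        rw [pow_succ]
        rfl
      have happ : (pe cs i * pe cs j) (t, ε)
          = (a * t * a⁻¹,
             ε + ((if t = s j * a^0 then (1:ZMod 2) else 0)
               + if t = s j * a^1 then 1 else 0)) := by
        show pe cs i (pe cs j (t, ε)) = _
        rw [pe_apply, pe_apply, hinv]
        simp only [Prod.mk.injEq]
        constructor
        · rw [ha]; group
        · have e1 : (s j * t * s j = s i) ↔ (t = s j * a^1) := by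
            rw [pow_one, ha]
            constructor
            · intro h
              rw [← h, show s j * (s j * t * s j * s j) = s j * (s j * (t * (s j * s j))) by
                  group,
                cs.simple_mul_simple_self, mul_one, cs.simple_mul_simple_cancel_left]
            · intro h
              rw [h, show s j * (s j * (s i * s j)) * s j = s j * (s j * (s i * (s j * s j))) by
                  group,
                cs.simple_mul_simple_self, mul_one, cs.simple_mul_simple_cancel_left]
          have e0 : (t = s j) ↔ (t = s j * a^0) := by rw [pow_zero, mul_one]
          rw [if_congr e1 rfl rfl, if_congr e0 rfl rfl]
          ring
      rw [hstep, happ, ih]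
      simp only [Prod.mk.injEq]
      constructor
      · group
      · have hcond : ∀ k : ℕ,
            (a * t * a⁻¹ = s j * a^k) ↔ (t = s j * a^(k+2)) := by
          intro k
          constructor
          · intro h
            have h1 : t = a⁻¹ * (s j * a^k) * a := by rw [← h]; group
            rw [h1, show a⁻¹ * (s j * a^k) * a = (a⁻¹ * s j) * (a^k * a) by group, haconj4]
            group
          · intro h
            rw [h, show a * (s j * a^(k+2)) * a⁻¹ = (a * s j) * (a^(k+2) * a⁻¹) by group,
              haconj5]
            group
        rw [show ∑ k ∈ Finset.range (2*n),
              (if a * t * a⁻¹ = s j * a^k then (1:ZMod 2) else 0)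
            = ∑ k ∈ Finset.range (2*n), (if t = s j * a^(k+2) then (1:ZMod 2) else 0) by
          apply Finset.sum_congr rfl
          intro k _
          rw [if_congr (hcond k) rfl rfl]]
        rw [show 2*(n+1) = (2*n+1)+1 by ring, Finset.sum_range_succ', Finset.sum_range_succ']
        simp only [show ∀ x:ℕ, x+1+1 = x+2 from fun x => rfl]
        ring

theorem pe_liftable : M.IsLiftable (pe cs) := by
  intro i j
  funext p
  obtain ⟨t, ε⟩ := p
  show ((pe cs i * pe cs j)^(M i j)) (t, ε) = (t, ε)
  rw [pe_mul_pow_apply]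
  have ha : (s i * s j)^(M i j) = 1 := cs.simple_mul_simple_pow i j
  simp only [Prod.mk.injEq]
  constructor
  · rw [ha]; group
  · rw [two_mul, Finset.sum_range_add]
    have : ∀ k ∈ Finset.range (M i j),
        (if t = s j * (s i * s j)^(M i j + k) then (1:ZMod 2) else 0)
          = if t = s j * (s i * s j)^k then 1 else 0 := by
      intro k _
      rw [pow_add, ha, one_mul]
    rw [Finset.sum_congr rfl this]
    have h2 : ∀ x : ZMod 2, x + x = 0 := by decide
    rw [h2]
    ring

/-- The parity homomorphism. -/
noncomputable def phi : W →* Function.End (W × ZMod 2) :=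
  cs.lift ⟨pe cs, pe_liftable cs⟩

theorem phi_wordProd (ω : List B) (t : W) (ε : ZMod 2) :
    phi cs (π ω) (t, ε) =
      (π ω * t * (π ω)⁻¹, ε + ((cs.rightInvSeq ω).count t : ZMod 2)) := by
  induction ω generalizing t ε with
  | nil =>
      rw [cs.wordProd_nil, map_one]
      show (t, ε) = _
      simp
  | cons i ω ih =>
      rw [cs.wordProd_cons, map_mul]
      have hc : (phi cs (s i) * phi cs (π ω)) (t, ε)
          = phi cs (s i) (phi cs (π ω) (t, ε)) := rfl
      rw [hc, ih]
      have hphi : phi cs (s i) = pe cs i := by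
        unfold phi
        exact cs.lift_apply_simple _ i
      rw [hphi, pe_apply]
      have hris : cs.rightInvSeq (i :: ω) = ((π ω)⁻¹ * s i * π ω) :: cs.rightInvSeq ω := rfl
      rw [hris]
      simp only [Prod.mk.injEq]
      constructor
      · rw [show (s i * π ω)⁻¹ = (π ω)⁻¹ * (s i)⁻¹ from mul_inv_rev _ _, cs.inv_simple]
        group
      · rw [List.count_cons]
        have hcond : (π ω * t * (π ω)⁻¹ = s i) ↔ ((π ω)⁻¹ * s i * π ω = t) := by
          constructor
          · intro h
            rw [← h]; group
          · intro h
            rw [← h]; group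
        simp only [beq_iff_eq]
        by_cases h : (π ω)⁻¹ * s i * π ω = t
        · rw [if_pos (hcond.mpr h), if_pos h]
          push_cast
          ring
        · rw [if_neg (fun hh => h (hcond.mp hh)), if_neg h]
          push_cast
          ring

theorem count_parity {ω ω' : List B} (h : π ω = π ω') (t : W) :
    (((cs.rightInvSeq ω).count t : ZMod 2)) = ((cs.rightInvSeq ω').count t : ZMod 2) := by
  have h1 := phi_wordProd cs ω t 0
  have h2 := phi_wordProd cs ω' t 0
  rw [h] at h1
  rw [h1] at h2
  have := congrArg Prod.snd h2
  simpa using this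

/-- Strong exchange property (for simple reflections): if `ω` is reduced and right
multiplication by `s i` decreases length, then `s i` occurs in the right inversion
sequence of `ω`. -/
theorem mem_rightInvSeq (ω : List B) (hω : cs.IsReduced ω) (i : B)
    (h : ℓ (π ω * s i) < ℓ (π ω)) : s i ∈ cs.rightInvSeq ω := by
  obtain ⟨α, hlen, hprod⟩ := cs.exists_reduced_word (π ω * s i)
  have hβ : π (α.concat i) = π ω := by
    rw [cs.wordProd_concat, ← hprod]
    rw [mul_assoc, cs.simple_mul_simple_self, mul_one]
  have hℓ : ℓ (π ω * s i) + 1 = ℓ (π ω) := by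
    rcases cs.length_mul_simple (π ω) i with h' | h' <;> omega
  have hβred : cs.IsReduced (α.concat i) := by
    unfold CoxeterSystem.IsReduced
    rw [hβ, List.length_concat, ← hlen, ← hprod]
    omega
  have hmem : s i ∈ cs.rightInvSeq (α.concat i) := by
    rw [cs.rightInvSeq_concat]
    simp
  have hcount : ((cs.rightInvSeq (α.concat i)).count (s i) : ZMod 2) = 1 := by
    rw [List.count_eq_one_of_mem (hβred.nodup_rightInvSeq) hmem]
    rfl
  have hpar := count_parity cs hβ (s i)
  rw [hcount] at hpar
  have hne : (cs.rightInvSeq ω).count (s i) ≠ 0 := by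
    intro h0
    rw [h0] at hpar
    simp at hpar
  exact List.count_pos_iff.mp (Nat.pos_of_ne_zero hne)

theorem exchange_erase (ω : List B) (hω : cs.IsReduced ω) (i : B)
    (h : ℓ (π ω * s i) < ℓ (π ω)) :
    ∃ k, k < ω.length ∧ π ω * s i = π (ω.eraseIdx k)
      ∧ ∃ δ : List B, π δ = s i ∧ ∀ b ∈ δ, b ∈ ω := by
  have hmem := mem_rightInvSeq cs ω hω i h
  obtain ⟨k, hk, hget⟩ := List.mem_iff_getElem.mp hmem
  rw [cs.length_rightInvSeq] at hk
  have hgetD : (cs.rightInvSeq ω).getD k 1 = s i := by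
    rw [List.getD_eq_getElem _ 1 (by rw [cs.length_rightInvSeq]; exact hk)]
    exact hget
  refine ⟨k, hk, ?_, ?_⟩
  · rw [← hgetD]
    exact (cs.wordProd_mul_getD_rightInvSeq ω k).symm ▸ (by rw [← cs.wordProd_mul_getD_rightInvSeq ω k])
  · have hgd := cs.getD_rightInvSeq ω k
    rw [hgetD] at hgd
    have hgk : ω[k]? = some ω[k] := by
      rw [List.getElem?_eq_getElem hk]
    rw [hgk] at hgd
    simp only [Option.map_some, Option.getD_some] at hgd
    refine ⟨(ω.drop (k+1)).reverse ++ [ω[k]] ++ ω.drop (k+1), ?_, ?_⟩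
    · rw [cs.wordProd_append, cs.wordProd_append, cs.wordProd_reverse, cs.wordProd_singleton]
      exact hgd.symm
    · intro b hb
      simp only [List.mem_append, List.mem_reverse, List.mem_singleton] at hb
      rcases hb with (hb | rfl) | hb
      · exact List.drop_subset _ _ hb
      · exact List.getElem_mem hk
      · exact List.drop_subset _ _ hb

theorem exists_reduced_subword (β : List B) :
    ∃ γ, cs.IsReduced γ ∧ π γ = π β ∧ ∀ b ∈ γ, b ∈ β := by
  suffices h : ∀ (n : ℕ) (β : List B), β.length ≤ n →
      ∃ γ, cs.IsReduced γ ∧ π γ = π β ∧ ∀ b ∈ γ, b ∈ β from h β.length β le_rfl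
  intro n
  induction n with
  | zero =>
      intro β hβ
      rw [Nat.le_zero, List.length_eq_zero_iff] at hβ
      subst hβ
      exact ⟨[], by simp [CoxeterSystem.IsReduced], rfl, by simp⟩
  | succ n ih =>
      intro β hβ
      by_cases hred : cs.IsReduced β
      · exact ⟨β, hred, rfl, fun b hb => hb⟩
      · have h0 : cs.IsReduced (β.take 0) := by simp [CoxeterSystem.IsReduced]
        have hfull : ¬ cs.IsReduced (β.take β.length) := by rwa [List.take_length]
        have hex : ∃ m, ¬ cs.IsReduced (β.take m) := ⟨β.length, hfull⟩
        have hp1 := Nat.find_spec hex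
        have hne : Nat.find hex ≠ 0 := by
          intro h
          rw [h] at hp1
          exact hp1 h0
        obtain ⟨p, hp⟩ := Nat.exists_eq_succ_of_ne_zero hne
        have hpred : cs.IsReduced (β.take p) := by
          by_contra hc
          have hle : Nat.find hex ≤ p := Nat.find_le hc
          omega
        have hple : p + 1 ≤ β.length := by
          have hle2 : Nat.find hex ≤ β.length := Nat.find_le hfull
          omega
        have hplt : p < β.length := by omega
        have htakelen : (β.take p).length = p := by
          rw [List.length_take]
          omega
        have hulen : ℓ (π (β.take p)) = p := by
          rw [hpred, htakelen]
        have htake : β.take (p+1) = β.take p ++ [β[p]] := by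
          rw [← List.take_concat_get hplt, List.concat_eq_append]
        have hnred : ¬ cs.IsReduced (β.take (p+1)) := by
          rw [hp] at hp1
          exact hp1
        have hlt : ℓ (π (β.take p) * s β[p]) < ℓ (π (β.take p)) := by
          rcases cs.length_mul_simple (π (β.take p)) β[p] with h' | h'
          · exfalso
            apply hnred
            unfold CoxeterSystem.IsReduced
            rw [htake, cs.wordProd_append, cs.wordProd_singleton, h', List.length_append,
              List.length_singleton, htakelen, hulen]
          · omega
        obtain ⟨k, hk, heq, -⟩ := exchange_erase cs (β.take p) hpred β[p] hlt
        rw [htakelen] at hk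
        set β₂ := ((β.take p).eraseIdx k) ++ β.drop (p+1) with hβ₂
        have herlen : ((β.take p).eraseIdx k).length + 1 = p := by
          rw [List.length_eraseIdx_add_one (by rwa [htakelen])]
          exact htakelen
        have hβ₂len : β₂.length ≤ n := by
          rw [hβ₂, List.length_append, List.length_drop]
          omega
        have hβ₂π : π β₂ = π β := by
          rw [hβ₂, cs.wordProd_append, ← heq]
          have : π (β.take p) * s β[p] * π (β.drop (p+1)) = π (β.take (p+1)) * π (β.drop (p+1)) := by
            rw [htake, cs.wordProd_append, cs.wordProd_singleton]
          rw [this, ← cs.wordProd_append, List.take_append_drop]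
        obtain ⟨γ, hγred, hγπ, hγsub⟩ := ih β₂ hβ₂len
        refine ⟨γ, hγred, by rw [hγπ, hβ₂π], fun b hb => ?_⟩
        have hb2 := hγsub b hb
        rw [hβ₂] at hb2
        rcases List.mem_append.mp hb2 with hb2 | hb2
        · exact List.take_subset p β ((List.eraseIdx_sublist _ k).subset hb2)
        · exact List.drop_subset _ β hb2

theorem letter_of_eq_simple (δ : List B) (i : B) (h : π δ = s i) : i ∈ δ := by
  obtain ⟨γ, hred, hπ, hsub⟩ := exists_reduced_subword cs δ
  rw [h] at hπ
  have hlen : γ.length = 1 := by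
    have h1 : ℓ (π γ) = γ.length := hred
    rw [hπ, cs.length_simple] at h1
    omega
  obtain ⟨b, rfl⟩ := List.length_eq_one_iff.mp hlen
  have hbi : b = i := simple_injective cs (by simpa using hπ)
  exact hbi ▸ hsub b (List.mem_singleton_self b)

theorem nodup_isReduced (β : List B) (hnd : β.Nodup) : cs.IsReduced β := by
  induction β using List.reverseRecOn with
  | nil => simp [CoxeterSystem.IsReduced]
  | append_singleton α i ih =>
      rw [List.nodup_append] at hnd
      obtain ⟨hα, -, hdisj⟩ := hnd
      have hαred := ih hα
      have hinot : i ∉ α := fun hin => hdisj i hin i (List.mem_singleton_self i) rfl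
      have hαlen : ℓ (π α) = α.length := hαred
      rcases cs.length_mul_simple (π α) i with h' | h'
      · show ℓ (π (α ++ [i])) = (α ++ [i]).length
        rw [cs.wordProd_append, cs.wordProd_singleton, h', List.length_append,
          List.length_singleton, hαlen]
      · exfalso
        have hlt : ℓ (π α * s i) < ℓ (π α) := by omega
        obtain ⟨-, -, -, δ, hδ, hδsub⟩ := exchange_erase cs α hαred i hlt
        exact hinot (hδsub i (letter_of_eq_simple cs δ i hδ))

theorem letters_subset : ∀ (n : ℕ) (ω ω' : List B), ω.length ≤ n →
    cs.IsReduced ω → cs.IsReduced ω' → π ω = π ω' → ∀ b ∈ ω, b ∈ ω' := by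
  intro n
  induction n with
  | zero =>
      intro ω ω' hlen _ _ _ b hb
      rw [Nat.le_zero, List.length_eq_zero_iff] at hlen
      subst hlen
      simp at hb
  | succ n ih =>
      intro ω ω' hlen hred hred' hπ b hb
      rcases List.eq_nil_or_concat ω with rfl | ⟨α, i, rfl⟩
      · simp at hb
      · rw [List.concat_eq_append] at hb hlen hred hπ
        have hα : cs.IsReduced α := by
          have := hred.take α.length
          rwa [List.take_left] at this
        have hαlen : ℓ (π α) = α.length := hα
        have hωπ : π (α ++ [i]) = π α * s i := by
          rw [cs.wordProd_append, cs.wordProd_singleton]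
        have hωlen : ℓ (π (α ++ [i])) = α.length + 1 := by
          have h1 : ℓ (π (α ++ [i])) = (α ++ [i]).length := hred
          rw [h1, List.length_append, List.length_singleton]
        have hcancel : π ω' * s i = π α := by
          rw [← hπ, hωπ, cs.simple_mul_simple_cancel_right]
        have hlt : ℓ (π ω' * s i) < ℓ (π ω') := by
          rw [hcancel, ← hπ, hαlen, hωlen]
          omega
        obtain ⟨k, hk, heq, δ, hδ, hδsub⟩ := exchange_erase cs ω' hred' i hlt
        have herased : cs.IsReduced (ω'.eraseIdx k) := by
          show ℓ (π (ω'.eraseIdx k)) = (ω'.eraseIdx k).length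
          have e1 : (ω'.eraseIdx k).length + 1 = ω'.length :=
            List.length_eraseIdx_add_one hk
          have e2 : ℓ (π ω') = ω'.length := hred'
          rw [← heq, hcancel, hαlen]
          have e3 : ℓ (π ω') = ℓ (π (α ++ [i])) := by rw [hπ]
          rw [hωlen] at e3
          omega
        have hπ2 : π α = π (ω'.eraseIdx k) := by rw [← heq, hcancel]
        have hαn : α.length ≤ n := by
          rw [List.length_append, List.length_singleton] at hlen
          omega
        rcases List.mem_append.mp hb with hbα | hbi
        · exact (List.eraseIdx_sublist ω' k).subset (ih α _ hαn hα herased hπ2 b hbα)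
        · rw [List.mem_singleton] at hbi
          subst hbi
          exact hδsub b (letter_of_eq_simple cs δ b hδ)

theorem isReduced_of_isReducedWord {w : W} {ω : List B} (h : IsReducedWord cs w ω) :
    cs.IsReduced ω := by
  obtain ⟨hπ, hlen⟩ := h
  show ℓ (π ω) = ω.length
  rw [hπ, hlen]

theorem Supp_eq {w : W} {ω₀ : List B} (h : IsReducedWord cs w ω₀) :
    Supp cs w = {b | b ∈ ω₀} := by
  ext b
  constructor
  · rintro ⟨ω, hω, hb⟩
    have h1 := isReduced_of_isReducedWord cs hω
    have h2 := isReduced_of_isReducedWord cs h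
    have hπ : π ω = π ω₀ := by rw [hω.1, h.1]
    exact letters_subset cs ω.length ω ω₀ le_rfl h1 h2 hπ b hb
  · intro hb
    exact ⟨ω₀, h, hb⟩


/-- `w` is a product of pairwise distinct simple reflections iff `ℓ(w) = |supp(w)|`. -/
theorem stmt1 (cs : CoxeterSystem M W) (w : W) :
    IsBoolean cs w ↔ cs.length w = (Supp cs w).ncard := by
  constructor
  · rintro ⟨ω, hnd, hπ⟩
    have hred := nodup_isReduced cs ω hnd
    have hrw : IsReducedWord cs w ω := ⟨hπ, by rw [← hπ]; exact hred.symm⟩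
    have hsupp : Supp cs w = ↑ω.toFinset := by
      rw [Supp_eq cs hrw, List.coe_toFinset]
    rw [hsupp, Set.ncard_coe_finset, List.toFinset_card_of_nodup hnd, ← hrw.2]
  · intro h
    obtain ⟨ω₀, hlen, hw⟩ := cs.exists_reduced_word w
    have hrw : IsReducedWord cs w ω₀ := ⟨hw.symm, by rw [hw]; exact hlen.symm⟩
    have hsupp : Supp cs w = ↑ω₀.toFinset := by
      rw [Supp_eq cs hrw, List.coe_toFinset]
    rw [hsupp, Set.ncard_coe_finset] at h
    have hcard : ω₀.toFinset.card = ω₀.dedup.length := List.card_toFinset ω₀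
    have hdlen : ω₀.dedup.length = ω₀.length := by have := hrw.2; omega
    have hnd : ω₀.Nodup := by
      rw [← List.dedup_eq_self]
      exact (List.dedup_sublist ω₀).eq_of_length hdlen
    exact ⟨ω₀, hnd, hw.symm⟩


end Paper
end

section
/- If w is a boolean element of a Coxeter group (i.e., ℓ(w) = |supp(w)|), then every u ≤ w in Bruhat order is also boolean. -/
set_option linter.unusedSectionVars false
namespace PaperAux
open List Real CoxeterSystem

variable {B W : Type*} [DecidableEq B] [Group W] {M : CoxeterMatrix B}

noncomputable section

variable (M : CoxeterMatrix B)

/-- entries of the Gram matrix of the geometric representation -/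
def kmat (a b : B) : ℝ := - Real.cos (Real.pi / M a b)

lemma kmat_diag (a : B) : kmat M a a = 1 := by
  simp [kmat, M.diagonal a]

lemma kmat_symm (a b : B) : kmat M a b = kmat M b a := by
  simp [kmat, M.symmetric a b]

/-- the linear functional `B(e_a, ·)` -/
def fform (a : B) : (B →₀ ℝ) →ₗ[ℝ] ℝ :=
  Finsupp.linearCombination ℝ (fun b => kmat M a b)

lemma fform_single (a b : B) : fform M a (Finsupp.single b 1) = kmat M a b := by
  simp [fform]

/-- the geometric reflection attached to a generator -/
def gsigma (a : B) : Module.End ℝ (B →₀ ℝ) :=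
  LinearMap.id - (2 : ℝ) • ((fform M a).smulRight (Finsupp.single a 1))

lemma gsigma_apply (a : B) (v : B →₀ ℝ) :
    gsigma M a v = v - (2 * fform M a v) • Finsupp.single a 1 := by
  simp [gsigma, two_smul, add_smul, mul_smul]

lemma gsigma_apply_of_form_eq_zero (a : B) (v : B →₀ ℝ) (h : fform M a v = 0) :
    gsigma M a v = v := by
  simp [gsigma_apply, h]

lemma gsigma_single_self (a : B) : gsigma M a (Finsupp.single a 1) =
    - Finsupp.single a 1 := by
  rw [gsigma_apply, fform_single, kmat_diag]
  module

lemma gsigma_sq (a : B) : gsigma M a * gsigma M a = 1 := by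
  apply LinearMap.ext
  intro v
  show gsigma M a (gsigma M a v) = v
  rw [gsigma_apply, gsigma_apply]
  rw [map_sub, map_smul]
  rw [fform_single, kmat_diag]
  simp only [smul_eq_mul, mul_one]
  module

end

end PaperAux

namespace PaperAux
open Real

section trig

private lemma trig1 (θ x : ℝ) :
    Real.sin (x+θ) * (4*(Real.cos θ)^2-1) + Real.sin x * (-(2*Real.cos θ))
      = Real.sin (x+θ+θ+θ) := by
  simp only [Real.sin_add, Real.cos_add]
  linear_combination (3*Real.cos θ*Real.sin x + Real.sin θ*Real.cos x) *
    (Real.sin_sq_add_cos_sq θ)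

private lemma trig2 (θ x : ℝ) :
    Real.sin (x+θ) * (2*Real.cos θ) + Real.sin x * (-1)
      = Real.sin (x+θ+θ) := by
  simp only [Real.sin_add, Real.cos_add]
  linear_combination Real.sin x * (Real.sin_sq_add_cos_sq θ)

private lemma trig3 (θ x : ℝ) :
    (-Real.sin x) * (4*(Real.cos θ)^2-1) + Real.sin (θ-x) * (-(2*Real.cos θ))
      = -Real.sin (x+θ+θ) := by
  simp only [Real.sin_add, Real.cos_add, Real.sin_sub]
  linear_combination (-Real.sin x) * (Real.sin_sq_add_cos_sq θ)

private lemma trig4 (θ x : ℝ) :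
    (-Real.sin x) * (2*Real.cos θ) + Real.sin (θ-x) * (-1)
      = Real.sin (θ-(x+θ+θ)) := by
  simp only [Real.sin_add, Real.cos_add, Real.sin_sub]
  linear_combination (Real.sin x * Real.cos θ + Real.sin θ * Real.cos x) *
    (Real.sin_sq_add_cos_sq θ)

end trig
end PaperAux

namespace PaperAux
open Real

variable {B W : Type*} [DecidableEq B] [Group W] {M : CoxeterMatrix B}

noncomputable section
variable (M : CoxeterMatrix B)

lemma gsigma_braid_of_ne (a b : B) (hab : a ≠ b) (hm : 2 ≤ M a b) :
    (gsigma M a * gsigma M b) ^ (M a b) = 1 := by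
  set m := M a b with hmdef
  set θ : ℝ := Real.pi / (m : ℝ) with hθ
  set c : ℝ := Real.cos θ with hc
  have hm0 : 0 < m := by omega
  have hmpos : (0:ℝ) < (m:ℝ) := by exact_mod_cast hm0
  have hκab : kmat M a b = -c := by
    show -Real.cos (Real.pi / (M a b : ℝ)) = -c
    rw [hc, hθ, hmdef]
  have hκba : kmat M b a = -c := (kmat_symm M b a).trans hκab
  have hθpos : 0 < θ := div_pos Real.pi_pos hmpos
  have hθlt : θ < Real.pi := by
    rw [hθ]
    exact div_lt_self Real.pi_pos (by exact_mod_cast hm)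
  have hs : 0 < Real.sin θ := Real.sin_pos_of_pos_of_lt_pi hθpos hθlt
  have hmθ : (m:ℝ) * θ = Real.pi := by
    rw [hθ]; field_simp
  set ea : B →₀ ℝ := Finsupp.single a 1 with hea
  set eb : B →₀ ℝ := Finsupp.single b 1 with heb
  set T := gsigma M a * gsigma M b with hT
  have hfaa : fform M a ea = 1 := by rw [hea, fform_single, kmat_diag]
  have hfbb : fform M b eb = 1 := by rw [heb, fform_single, kmat_diag]
  have hfab : fform M a eb = -c := by rw [heb, fform_single, hκab]
  have hfba : fform M b ea = -c := by rw [hea, fform_single, hκba]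
  have hga_ea : gsigma M a ea = -ea := by rw [hea]; exact gsigma_single_self M a
  have hgb_eb : gsigma M b eb = -eb := by rw [heb]; exact gsigma_single_self M b
  have hgb_ea : gsigma M b ea = ea + (2*c) • eb := by
    rw [gsigma_apply, hfba]; module
  have hga_eb : gsigma M a eb = eb + (2*c) • ea := by
    rw [gsigma_apply, hfab]; module
  have hTea : T ea = (4*c^2-1) • ea + (2*c) • eb := by
    rw [hT, Module.End.mul_apply, hgb_ea, map_add, map_smul, hga_ea, hga_eb]
    module
  have hTeb : T eb = (-(2*c)) • ea + (-1 : ℝ) • eb := by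
    rw [hT, Module.End.mul_apply, hgb_eb, map_neg, hga_eb]
    module
  have key1 : ∀ k : ℕ, (T^k) (Real.sin θ • ea)
      = Real.sin ((2*(k:ℝ))*θ + θ) • ea + Real.sin ((2*(k:ℝ))*θ) • eb := by
    intro k
    induction k with
    | zero => simp
    | succ k ih =>
      rw [pow_succ', Module.End.mul_apply, ih, map_add, map_smul, map_smul, hTea, hTeb,
        smul_add, smul_add, smul_smul, smul_smul, smul_smul, smul_smul]
      rw [add_add_add_comm, ← add_smul, ← add_smul]
      have e1 : (2*((k:ℝ)+1))*θ + θ = ((2*(k:ℝ))*θ) + θ + θ + θ := by ring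
      have e2 : (2*((k:ℝ)+1))*θ = ((2*(k:ℝ))*θ) + θ + θ := by ring
      push_cast
      rw [e1, e2, ← trig1 θ ((2*(k:ℝ))*θ), ← trig2 θ ((2*(k:ℝ))*θ)]
  have key2 : ∀ k : ℕ, (T^k) (Real.sin θ • eb)
      = (-Real.sin ((2*(k:ℝ))*θ)) • ea + Real.sin (θ - (2*(k:ℝ))*θ) • eb := by
    intro k
    induction k with
    | zero => simp
    | succ k ih =>
      rw [pow_succ', Module.End.mul_apply, ih, map_add, map_smul, map_smul, hTea, hTeb,
        smul_add, smul_add, smul_smul, smul_smul, smul_smul, smul_smul]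
      rw [add_add_add_comm, ← add_smul, ← add_smul]
      have e1 : (2*((k:ℝ)+1))*θ = ((2*(k:ℝ))*θ) + θ + θ := by ring
      push_cast
      rw [e1, ← trig3 θ ((2*(k:ℝ))*θ), ← trig4 θ ((2*(k:ℝ))*θ)]
  have e2m : (2*(m:ℝ))*θ = 2 * Real.pi := by
    linear_combination 2 * hmθ
  have hTm_ea : (T^m) ea = ea := by
    have h := key1 m
    rw [map_smul, e2m, Real.sin_two_pi, add_comm ((2*Real.pi)) θ, Real.sin_add_two_pi] at h
    simp only [zero_smul, add_zero] at h
    exact smul_right_injective (B →₀ ℝ) (ne_of_gt hs) h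
  have hTm_eb : (T^m) eb = eb := by
    have h := key2 m
    rw [map_smul, e2m, Real.sin_two_pi, Real.sin_sub_two_pi] at h
    simp only [neg_zero, zero_smul, zero_add] at h
    exact smul_right_injective (B →₀ ℝ) (ne_of_gt hs) h
  -- decomposition of an arbitrary vector
  apply LinearMap.ext
  intro v
  show (T^m) v = v
  set κ : ℝ := -c with hκ
  have hs2 : Real.sin θ^2 = 1 - κ^2 := by
    rw [hκ, hc]
    linear_combination (Real.sin_sq_add_cos_sq θ)
  have h1κ : (1:ℝ) - κ^2 ≠ 0 := by
    rw [← hs2]; exact pow_ne_zero 2 (ne_of_gt hs)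
  set x : ℝ := (fform M a v - κ * fform M b v)/(1 - κ^2) with hx
  set y : ℝ := (fform M b v - κ * fform M a v)/(1 - κ^2) with hy
  set z : (B →₀ ℝ) := v - x • ea - y • eb with hz
  have hfaz : fform M a z = 0 := by
    rw [hz, map_sub, map_sub, map_smul, map_smul, hfaa, hfab, hx, hy]
    simp only [smul_eq_mul]
    field_simp
    ring
  have hfbz : fform M b z = 0 := by
    rw [hz, map_sub, map_sub, map_smul, map_smul, hfba, hfbb, hx, hy]
    simp only [smul_eq_mul]
    field_simp
    ring
  have hTz : ∀ k : ℕ, (T^k) z = z := by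
    intro k
    induction k with
    | zero => simp
    | succ k ih =>
      rw [pow_succ', Module.End.mul_apply, ih, hT, Module.End.mul_apply,
        gsigma_apply_of_form_eq_zero M b z hfbz, gsigma_apply_of_form_eq_zero M a z hfaz]
  have hv : v = x • ea + y • eb + z := by rw [hz]; abel
  calc (T^m) v = x • ((T^m) ea) + y • ((T^m) eb) + (T^m) z := by
        rw [hv, map_add, map_add, map_smul, map_smul]
    _ = v := by rw [hTm_ea, hTm_eb, hTz, hv]

end
end PaperAux

namespace PaperAux
open Real CoxeterSystem

variable {B W : Type*} [DecidableEq B] [Group W] {M : CoxeterMatrix B}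

noncomputable section

lemma gsigma_braid (M : CoxeterMatrix B) (a b : B) :
    (gsigma M a * gsigma M b) ^ (M a b) = 1 := by
  rcases eq_or_ne a b with rfl | hab
  · rw [M.diagonal a, pow_one, gsigma_sq]
  · rcases Nat.eq_zero_or_pos (M a b) with h0 | hpos
    · rw [h0, pow_zero]
    · have h1 : M a b ≠ 1 := M.off_diagonal a b hab
      exact gsigma_braid_of_ne M a b hab (by omega)

/-- the geometric representation -/
def geomRep (cs : CoxeterSystem M W) : W →* Module.End ℝ (B →₀ ℝ) :=
  cs.lift ⟨fun i => gsigma M i, fun i i' => gsigma_braid M i i'⟩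

lemma geomRep_simple (cs : CoxeterSystem M W) (i : B) :
    geomRep cs (cs.simple i) = gsigma M i :=
  cs.lift_apply_simple _ i

lemma simple_injective (cs : CoxeterSystem M W) : Function.Injective cs.simple := by
  intro i j hij
  by_contra hne
  have h : gsigma M i = gsigma M j := by
    rw [← geomRep_simple cs i, ← geomRep_simple cs j, hij]
  have h2 := congrArg (fun f : Module.End ℝ (B →₀ ℝ) => (f (Finsupp.single i 1)) i) h
  simp only [gsigma_single_self] at h2
  rw [gsigma_apply, fform_single] at h2
  simp only [Finsupp.coe_neg, Pi.neg_apply, Finsupp.single_eq_same, Finsupp.coe_sub,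
    Finsupp.coe_smul, Pi.sub_apply, Pi.smul_apply, smul_eq_mul,
    Finsupp.single_eq_of_ne (Ne.symm (fun hq => hne hq.symm))] at h2
  norm_num at h2

end
end PaperAux


namespace PaperAux
open List Real CoxeterSystem

variable {B W : Type*} [DecidableEq B] [Group W] {M : CoxeterMatrix B}

noncomputable section
open scoped Classical

/-- the generator of the parity representation on `W × ZMod 2` -/
def etaMap (cs : CoxeterSystem M W) (i : B) : Function.End (W × ZMod 2) :=
  fun p => (cs.simple i * p.1 * cs.simple i,
    p.2 + (if p.1 = cs.simple i then 1 else 0))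

lemma etaMap_mul_apply (f g : Function.End (W × ZMod 2))
    (p : W × ZMod 2) : (f * g) p = f (g p) := rfl

lemma conj_cond {X y t : W} : (X * t * X⁻¹ = y) ↔ (t = X⁻¹ * y * X) := by
  constructor
  · intro h; rw [← h]; group
  · intro h; rw [h]; group

lemma sb_mul_p_pow (cs : CoxeterSystem M W) (a b : B) (k : ℕ) :
    cs.simple b * (cs.simple a * cs.simple b)^k
      = (cs.simple b * cs.simple a)^k * cs.simple b := by
  induction k with
  | zero => simp
  | succ k ih =>
    rw [pow_succ, ← mul_assoc, ih, pow_succ]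
    group

lemma etaMap_pair_pow (cs : CoxeterSystem M W) (a b : B) (k : ℕ) (p : W × ZMod 2) :
    ((etaMap cs a * etaMap cs b)^k) p
      = ((cs.simple a * cs.simple b)^k * p.1 * ((cs.simple a * cs.simple b)^k)⁻¹,
        p.2 + ∑ j ∈ Finset.range (2*k),
          (if p.1 = (cs.simple b * cs.simple a)^j * cs.simple b then 1 else 0)) := by
  set sa := cs.simple a with hsa
  set sb := cs.simple b with hsb
  set q := sb * sa with hq
  have hpinv : (sa*sb)⁻¹ = q := by
    rw [mul_inv_rev, hsa, hsb, cs.inv_simple, cs.inv_simple, ← hsa, ← hsb, hq]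
  induction k with
  | zero =>
    simp only [pow_zero, Nat.mul_zero, Finset.range_zero, Finset.sum_empty, add_zero,
      one_mul, inv_one, mul_one]
    rfl
  | succ k ih =>
    have hinv : ((sa*sb)^k)⁻¹ = q^k := by rw [← inv_pow, hpinv]
    have G1 : ((sa*sb)^k)⁻¹ * sb * (sa*sb)^k = q^(2*k) * sb := by
      rw [hinv, mul_assoc, sb_mul_p_pow cs a b k]
      simp only [← hsb, ← hsa, ← hq]
      rw [← mul_assoc, ← pow_add, two_mul]
    have G2 : ((sa*sb)^k)⁻¹ * (sb*sa*sb) * (sa*sb)^k = q^(2*k+1) * sb := by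
      rw [hinv]
      have e1 : q^k * (sb*sa*sb) * (sa*sb)^k = q^k * q * (sb * (sa*sb)^k) := by
        rw [hq]; group
      rw [e1, sb_mul_p_pow cs a b k]
      simp only [← hsb, ← hsa, ← hq]
      rw [← pow_succ, ← mul_assoc, ← pow_add]
      congr 2
      omega
    rw [pow_succ', etaMap_mul_apply, ih, etaMap_mul_apply]
    show (etaMap cs a) (sb * _ * sb, _) = _
    simp only [etaMap, ← hsa, ← hsb]
    have hc1 : ((sa*sb)^k * p.1 * ((sa*sb)^k)⁻¹ = sb) ↔ (p.1 = q^(2*k) * sb) := by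
      rw [conj_cond, G1]
    have hc2 : (sb * ((sa*sb)^k * p.1 * ((sa*sb)^k)⁻¹) * sb = sa)
        ↔ (p.1 = q^(2*k+1) * sb) := by
      have : (sb * ((sa*sb)^k * p.1 * ((sa*sb)^k)⁻¹) * sb = sa)
          ↔ (sb * ((sa*sb)^k * p.1 * ((sa*sb)^k)⁻¹) * sb⁻¹ = sa) := by
        rw [hsb, cs.inv_simple]
      rw [this, conj_cond, conj_cond]
      rw [show (sb⁻¹ : W) = sb by rw [hsb, cs.inv_simple]]
      rw [show ((sa*sb)^k)⁻¹ * (sb * sa * sb) * (sa*sb)^k = q^(2*k+1) * sb from G2]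
    rw [Prod.mk.injEq]
    constructor
    · -- first components
      rw [pow_succ' (sa*sb) k, mul_inv_rev, hinv, hpinv]
      simp only [mul_assoc]
      rw [hq]
    · -- second components
      have h2 : 2*(k+1) = (2*k) + 1 + 1 := by omega
      rw [h2, Finset.sum_range_succ, Finset.sum_range_succ]
      simp only [hc1, hc2]
      push_cast
      ring
end
end PaperAux

namespace PaperAux
open List Real CoxeterSystem

variable {B W : Type*} [DecidableEq B] [Group W] {M : CoxeterMatrix B}

noncomputable section
open scoped Classical

lemma zmod2_eq_of_add_eq_zero : ∀ x y : ZMod 2, x + y = 0 → x = y := by decide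
lemma zmod2_eq_zero_of_ne_one : ∀ x : ZMod 2, x ≠ 1 → x = 0 := by decide
lemma zmod2_add_self : ∀ x : ZMod 2, x + x = 0 := by decide

lemma etaMap_liftable (cs : CoxeterSystem M W) :
    ∀ a b : B, (etaMap cs a * etaMap cs b) ^ M a b = 1 := by
  intro a b
  funext p
  rw [etaMap_pair_pow, cs.simple_mul_simple_pow a b]
  have hq : (cs.simple b * cs.simple a) ^ M a b = 1 := cs.simple_mul_simple_pow' a b
  have hsum : ∑ j ∈ Finset.range (2 * M a b),
      (if p.1 = (cs.simple b * cs.simple a)^j * cs.simple b then (1 : ZMod 2) else 0) = 0 := by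
    rw [two_mul, Finset.sum_range_add]
    have : ∀ j, (cs.simple b * cs.simple a)^(M a b + j) = (cs.simple b * cs.simple a)^j := by
      intro j; rw [pow_add, hq, one_mul]
    simp only [this]
    exact zmod2_add_self _
  rw [hsum]
  show _ = p
  simp

/-- the parity representation -/
def etaRep (cs : CoxeterSystem M W) : W →* Function.End (W × ZMod 2) :=
  cs.lift ⟨etaMap cs, etaMap_liftable cs⟩

/-- `eta cs w t` is the parity of the number of occurrences of `t` in any
inversion sequence of a word for `w`.  -/
def eta (cs : CoxeterSystem M W) (w t : W) : ZMod 2 := (etaRep cs w (t, 0)).2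

lemma etaRep_simple (cs : CoxeterSystem M W) (i : B) :
    etaRep cs (cs.simple i) = etaMap cs i := cs.lift_apply_simple _ i

lemma etaRep_apply (cs : CoxeterSystem M W) (w : W) : ∀ t (ε : ZMod 2),
    etaRep cs w (t, ε) = (w * t * w⁻¹, ε + eta cs w t) := by
  unfold eta
  induction w using cs.simple_induction_left with
  | one =>
    intro t ε
    simp only [map_one]
    show (t, ε) = (1 * t * 1⁻¹, ε + ((t, (0:ZMod 2))).2)
    simp
  | mul_simple_left w i ih =>
    intro t ε
    rw [map_mul, etaMap_mul_apply, etaMap_mul_apply, ih t ε, ih t 0, etaRep_simple]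
    simp only [etaMap, Prod.mk.injEq]
    constructor
    · rw [mul_inv_rev, cs.inv_simple]
      simp [mul_assoc]
    · ring

lemma eta_mul (cs : CoxeterSystem M W) (w v t : W) :
    eta cs (w * v) t = eta cs v t + eta cs w (v * t * v⁻¹) := by
  have h1 : etaRep cs (w * v) (t, 0) = ((w*v) * t * (w*v)⁻¹, 0 + eta cs (w*v) t) :=
    etaRep_apply cs (w*v) t 0
  have h2 : etaRep cs (w * v) (t, 0) = etaRep cs w (etaRep cs v (t, 0)) := by
    rw [map_mul]; rfl
  rw [etaRep_apply cs v t 0, etaRep_apply cs w (v * t * v⁻¹) (0 + eta cs v t)] at h2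
  rw [h1] at h2
  have := congrArg Prod.snd h2
  simp only [zero_add] at this
  exact this

lemma eta_simple (cs : CoxeterSystem M W) (i : B) (t : W) :
    eta cs (cs.simple i) t = if t = cs.simple i then 1 else 0 := by
  unfold eta
  rw [etaRep_simple]
  simp [etaMap]

lemma eta_wordProd (cs : CoxeterSystem M W) (ω : List B) (t : W) :
    eta cs (cs.wordProd ω) t = ((cs.rightInvSeq ω).count t : ZMod 2) := by
  induction ω with
  | nil =>
    simp only [wordProd_nil, rightInvSeq_nil, count_nil, Nat.cast_zero]
    unfold eta
    rw [map_one]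
    rfl
  | cons i ω ih =>
    rw [wordProd_cons, eta_mul, ih, eta_simple]
    rw [show cs.rightInvSeq (i :: ω)
        = ((cs.wordProd ω)⁻¹ * cs.simple i * cs.wordProd ω) :: cs.rightInvSeq ω from rfl]
    rw [List.count_cons]
    have hcond : (cs.wordProd ω * t * (cs.wordProd ω)⁻¹ = cs.simple i)
        ↔ ((cs.wordProd ω)⁻¹ * cs.simple i * cs.wordProd ω = t) := by
      rw [conj_cond]; exact eq_comm
    push_cast
    simp only [hcond, beq_iff_eq]
    try rw [add_comm]

lemma eta_inv (cs : CoxeterSystem M W) (u t : W) :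
    eta cs u⁻¹ t = eta cs u (u⁻¹ * t * u) := by
  have h0 : eta cs 1 t = 0 := by
    unfold eta; rw [map_one]; rfl
  have := eta_mul cs u u⁻¹ t
  rw [mul_inv_cancel] at this
  rw [h0] at this
  have h2 := zmod2_eq_of_add_eq_zero _ _ this.symm
  rw [h2]
  congr 1
  group

lemma zmod2_helper : ∀ x : ZMod 2, x + 1 + x = 1 := by decide

lemma eta_reflection_self (cs : CoxeterSystem M W) {t : W}
    (ht : cs.IsReflection t) : eta cs t t = 1 := by
  obtain ⟨u, i, rfl⟩ := ht
  rw [show u * cs.simple i * u⁻¹ = u * (cs.simple i * u⁻¹) by group]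
  rw [eta_mul]
  have e5 : (cs.simple i * u⁻¹) * (u * (cs.simple i * u⁻¹)) * (cs.simple i * u⁻¹)⁻¹
      = cs.simple i := by group
  rw [e5]
  rw [eta_mul cs (cs.simple i) u⁻¹ (u * (cs.simple i * u⁻¹))]
  have e4 : u⁻¹ * (u * (cs.simple i * u⁻¹)) * u⁻¹⁻¹ = cs.simple i := by group
  rw [e4, eta_simple, if_pos rfl]
  have e6 : eta cs u⁻¹ (u * (cs.simple i * u⁻¹)) = eta cs u (cs.simple i) := by
    rw [eta_inv]
    congr 1
    group
  rw [e6]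
  exact zmod2_helper _

lemma length_mul_lt_of_eta_one (cs : CoxeterSystem M W) {w t : W}
    (h : eta cs w t = 1) : cs.length (w * t) < cs.length w := by
  obtain ⟨ω, hred, rfl⟩ := cs.exists_reduced_word' w
  have hcount : ((cs.rightInvSeq ω).count t : ZMod 2) = 1 := by
    rw [← eta_wordProd]; exact h
  have hmem : t ∈ cs.rightInvSeq ω := by
    by_contra hmem
    rw [List.count_eq_zero_of_not_mem hmem] at hcount
    simp at hcount
  obtain ⟨j, hj, hget⟩ := List.mem_iff_getElem.mp hmem
  have hgetD : (cs.rightInvSeq ω).getD j 1 = t := by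
    rw [List.getD_eq_getElem _ _ hj, hget]
  have hprod : cs.wordProd ω * t = cs.wordProd (ω.eraseIdx j) := by
    rw [← hgetD]
    exact cs.wordProd_mul_getD_rightInvSeq ω j
  rw [hprod]
  calc cs.length (cs.wordProd (ω.eraseIdx j)) ≤ (ω.eraseIdx j).length :=
        cs.length_wordProd_le _
    _ < ω.length := by
        rw [List.length_eraseIdx]
        have hj' : j < ω.length := by simpa using hj
        simp [hj']
        omega
    _ = cs.length (cs.wordProd ω) := hred.symm

lemma eta_one_of_isRightInversion (cs : CoxeterSystem M W) {w t : W}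
    (ht : cs.IsReflection t) (hlt : cs.length (w * t) < cs.length w) :
    eta cs w t = 1 := by
  by_contra hne
  have h0 : eta cs w t = 0 := zmod2_eq_zero_of_ne_one _ hne
  have h1 : eta cs (w * t) t = 1 := by
    rw [eta_mul]
    have : t * t * t⁻¹ = t := by group
    rw [this, h0, eta_reflection_self cs ht]
    rfl
  have h2 := length_mul_lt_of_eta_one cs h1
  rw [mul_assoc, ht.mul_self, mul_one] at h2
  omega

theorem strong_exchange_right (cs : CoxeterSystem M W) {ω : List B} {t : W}
    (ht : cs.IsReflection t) (hlt : cs.length (cs.wordProd ω * t) < cs.length (cs.wordProd ω)) :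
    t ∈ cs.rightInvSeq ω := by
  have h1 : eta cs (cs.wordProd ω) t = 1 := eta_one_of_isRightInversion cs ht hlt
  rw [eta_wordProd] at h1
  by_contra hmem
  rw [List.count_eq_zero_of_not_mem hmem] at h1
  simp at h1

theorem strong_exchange_left (cs : CoxeterSystem M W) {ω : List B} {t : W}
    (ht : cs.IsReflection t) (hlt : cs.length (t * cs.wordProd ω) < cs.length (cs.wordProd ω)) :
    t ∈ cs.leftInvSeq ω := by
  have h1 : cs.wordProd ω.reverse = (cs.wordProd ω)⁻¹ := cs.wordProd_reverse ω
  have h2 : cs.length (cs.wordProd ω.reverse * t) < cs.length (cs.wordProd ω.reverse) := by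
    rw [h1]
    have e : (cs.wordProd ω)⁻¹ * t = (t⁻¹ * cs.wordProd ω)⁻¹ := by group
    rw [e, cs.length_inv, cs.length_inv, ht.inv]
    exact hlt
  have h3 := strong_exchange_right cs ht h2
  rw [cs.rightInvSeq_reverse] at h3
  simpa using h3

/-- exchange property for a simple reflection -/
lemma exchange_right_simple (cs : CoxeterSystem M W) (ω : List B) (i : B)
    (hlt : cs.length (cs.wordProd ω * cs.simple i) < cs.length (cs.wordProd ω)) :
    ∃ j < ω.length, cs.wordProd ω * cs.simple i = cs.wordProd (ω.eraseIdx j) := by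
  have hmem := strong_exchange_right cs (cs.isReflection_simple i) hlt
  obtain ⟨j, hj, hget⟩ := List.mem_iff_getElem.mp hmem
  have hj' : j < ω.length := by simpa using hj
  refine ⟨j, hj', ?_⟩
  have hgetD : (cs.rightInvSeq ω).getD j 1 = cs.simple i := by
    rw [List.getD_eq_getElem _ _ hj, hget]
  rw [← hgetD]
  exact cs.wordProd_mul_getD_rightInvSeq ω j

end
end PaperAux

namespace PaperAux
open List CoxeterSystem

variable {B W : Type*} [DecidableEq B] [Group W] {M : CoxeterMatrix B}

theorem exists_reduced_sublist (cs : CoxeterSystem M W) (ω : List B) :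
    ∃ ω', ω'.Sublist ω ∧ cs.IsReduced ω' ∧ cs.wordProd ω' = cs.wordProd ω := by
  generalize hn : ω.length = n
  induction n using Nat.strong_induction_on generalizing ω with
  | _ n ih =>
  by_cases hred : cs.IsReduced ω
  · exact ⟨ω, List.Sublist.refl _, hred, rfl⟩
  rcases List.eq_nil_or_concat ω with rfl | ⟨ω₀, i, rfl⟩
  · exact absurd (by simp [CoxeterSystem.IsReduced]) hred
  rw [List.concat_eq_append] at *
  have hlen : ω₀.length + 1 = n := by simpa using hn
  have hπ : cs.wordProd (ω₀ ++ [i]) = cs.wordProd ω₀ * cs.simple i := by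
    rw [cs.wordProd_append, cs.wordProd_singleton]
  by_cases h0 : cs.IsReduced ω₀
  · -- exchange case
    have hlt : cs.length (cs.wordProd ω₀ * cs.simple i) < cs.length (cs.wordProd ω₀) := by
      rcases cs.length_mul_simple (cs.wordProd ω₀) i with h | h
      · exfalso
        apply hred
        show cs.length (cs.wordProd (ω₀ ++ [i])) = (ω₀ ++ [i]).length
        rw [hπ, h, h0]
        simp
      · omega
    obtain ⟨j, hj, hexch⟩ := exchange_right_simple cs ω₀ i hlt
    have hlen2 : (ω₀.eraseIdx j).length < n := by
      rw [List.length_eraseIdx]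
      simp [hj]
      omega
    obtain ⟨ω', hsub, hred', hprod⟩ := ih _ hlen2 (ω₀.eraseIdx j) rfl
    refine ⟨ω', ?_, hred', ?_⟩
    · exact hsub.trans ((List.eraseIdx_sublist ω₀ j).trans (List.sublist_append_left ω₀ [i]))
    · rw [hprod, ← hexch, hπ]
  · -- recurse on ω₀
    have hlen0 : ω₀.length < n := by omega
    obtain ⟨β, hβsub, hβred, hβprod⟩ := ih _ hlen0 ω₀ rfl
    have hβlen : β.length < ω₀.length := by
      have h1 : cs.length (cs.wordProd ω₀) ≤ ω₀.length := cs.length_wordProd_le ω₀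
      have h2 : cs.length (cs.wordProd ω₀) ≠ ω₀.length := h0
      have h3 : β.length = cs.length (cs.wordProd ω₀) := by
        rw [← hβprod]; exact hβred.symm
      omega
    have hlen3 : (β ++ [i]).length < n := by
      simp only [List.length_append, List.length_singleton]
      omega
    obtain ⟨ω', hsub, hred', hprod⟩ := ih _ hlen3 (β ++ [i]) rfl
    refine ⟨ω', ?_, hred', ?_⟩
    · exact hsub.trans (hβsub.append (List.Sublist.refl [i]))
    · rw [hprod, cs.wordProd_append, cs.wordProd_singleton, hβprod, hπ]

end PaperAux

namespace PaperAux
open List CoxeterSystem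

variable {B W : Type*} [DecidableEq B] [Group W] {M : CoxeterMatrix B}

lemma wordProd_mem_closure (cs : CoxeterSystem M W) (J : Set B) (γ : List B)
    (hγ : ∀ l ∈ γ, l ∈ J) :
    cs.wordProd γ ∈ Subgroup.closure {x : W | ∃ l ∈ J, x = cs.simple l} := by
  induction γ with
  | nil => rw [cs.wordProd_nil]; exact Subgroup.one_mem _
  | cons j γ ih =>
    rw [cs.wordProd_cons]
    refine Subgroup.mul_mem _ ?_ (ih (fun l hl => hγ l (List.mem_cons_of_mem j hl)))
    exact Subgroup.subset_closure ⟨j, hγ j List.mem_cons_self, rfl⟩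

lemma lis_mem_closure (cs : CoxeterSystem M W) (ω : List B) {t : W}
    (ht : t ∈ cs.leftInvSeq ω) :
    t ∈ Subgroup.closure {x : W | ∃ l ∈ ω, x = cs.simple l} := by
  obtain ⟨j, hj, hget⟩ := List.mem_iff_getElem.mp ht
  have hj' : j < ω.length := by simpa using hj
  have hgetD : (cs.leftInvSeq ω).getD j 1 = t := by
    rw [List.getD_eq_getElem _ _ hj, hget]
  rw [← hgetD, cs.getD_leftInvSeq]
  rw [List.getElem?_eq_getElem hj']
  simp only [Option.map_some, Option.getD_some]
  set H := Subgroup.closure {x : W | ∃ l ∈ ω, x = cs.simple l} with hH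
  have hmem1 : cs.wordProd (ω.take j) ∈ H :=
    wordProd_mem_closure cs _ _ (fun l hl => List.mem_of_mem_take hl)
  have hmem2 : cs.simple (ω[j]) ∈ H :=
    Subgroup.subset_closure ⟨ω[j], List.getElem_mem hj', rfl⟩
  exact Subgroup.mul_mem _ (Subgroup.mul_mem _ hmem1 hmem2) (Subgroup.inv_mem _ hmem1)

end PaperAux

namespace PaperAux
open List CoxeterSystem

variable {B W : Type*} [DecidableEq B] [Group W] {M : CoxeterMatrix B}

lemma prefix_mem_closure_lis (cs : CoxeterSystem M W) (ω : List B) (j : ℕ) :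
    cs.wordProd (ω.take j) ∈ Subgroup.closure {x : W | x ∈ cs.leftInvSeq ω} := by
  induction j with
  | zero => simp [Subgroup.one_mem]
  | succ j ih =>
    by_cases hj : j < ω.length
    · have htake : ω.take (j+1) = ω.take j ++ [ω[j]] := by
        rw [List.take_succ, List.getElem?_eq_getElem hj]
        rfl
      have hkey : cs.wordProd (ω.take (j+1))
          = (cs.leftInvSeq ω).getD j 1 * cs.wordProd (ω.take j) := by
        rw [cs.getD_leftInvSeq, List.getElem?_eq_getElem hj]
        simp only [Option.map_some, Option.getD_some]
        rw [htake, cs.wordProd_append, cs.wordProd_singleton]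
        group
      rw [hkey]
      refine Subgroup.mul_mem _ ?_ ih
      apply Subgroup.subset_closure
      have hlen : j < (cs.leftInvSeq ω).length := by
        rw [cs.length_leftInvSeq]; exact hj
      rw [List.getD_eq_getElem _ _ hlen]
      exact List.getElem_mem hlen
    · have : ω.take (j+1) = ω.take j := by
        rw [List.take_of_length_le (by omega), List.take_of_length_le (by omega)]
      rw [this]; exact ih

lemma simple_mem_closure_lis (cs : CoxeterSystem M W) (ω : List B) {i : B}
    (hi : i ∈ ω) :
    cs.simple i ∈ Subgroup.closure {x : W | x ∈ cs.leftInvSeq ω} := by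
  obtain ⟨j, hj, hget⟩ := List.mem_iff_getElem.mp hi
  have htake : ω.take (j+1) = ω.take j ++ [i] := by
    rw [List.take_succ, List.getElem?_eq_getElem hj, hget]
    rfl
  have : cs.simple i = (cs.wordProd (ω.take j))⁻¹ * cs.wordProd (ω.take (j+1)) := by
    rw [htake, cs.wordProd_append, cs.wordProd_singleton]
    group
  rw [this]
  exact Subgroup.mul_mem _ (Subgroup.inv_mem _ (prefix_mem_closure_lis cs ω j))
    (prefix_mem_closure_lis cs ω (j+1))

lemma exists_word_of_mem_closure (cs : CoxeterSystem M W) (J : Set B) {u : W}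
    (hu : u ∈ Subgroup.closure {x : W | ∃ l ∈ J, x = cs.simple l}) :
    ∃ δ : List B, (∀ l ∈ δ, l ∈ J) ∧ cs.wordProd δ = u := by
  induction hu using Subgroup.closure_induction with
  | mem x hx =>
    obtain ⟨l, hl, rfl⟩ := hx
    exact ⟨[l], by simpa using hl, cs.wordProd_singleton l⟩
  | one => exact ⟨[], by simp, cs.wordProd_nil⟩
  | mul x y hx hy ihx ihy =>
    obtain ⟨δ₁, h1, rfl⟩ := ihx
    obtain ⟨δ₂, h2, rfl⟩ := ihy
    exact ⟨δ₁ ++ δ₂, by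
      intro l hl
      rcases List.mem_append.mp hl with h | h
      exacts [h1 l h, h2 l h], cs.wordProd_append δ₁ δ₂⟩
  | inv x hx ihx =>
    obtain ⟨δ, h1, rfl⟩ := ihx
    exact ⟨δ.reverse, fun l hl => h1 l (List.mem_reverse.mp hl), cs.wordProd_reverse δ⟩

/-- all reduced words for the same element have the same letters -/
theorem mem_of_mem_reduced (cs : CoxeterSystem M W) {ω₁ ω₂ : List B}
    (h1 : cs.IsReduced ω₁) (h2 : cs.IsReduced ω₂)
    (heq : cs.wordProd ω₁ = cs.wordProd ω₂) {i : B} (hi : i ∈ ω₁) : i ∈ ω₂ := by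
  classical
  set H₂ := Subgroup.closure {x : W | ∃ l ∈ ω₂, x = cs.simple l} with hH₂
  have hlis : ∀ t ∈ cs.leftInvSeq ω₁, t ∈ H₂ := by
    intro t ht
    have hrefl : cs.IsReflection t := cs.isReflection_of_mem_leftInvSeq ω₁ ht
    have hinv := (cs.isLeftInversion_of_mem_leftInvSeq h1 ht).2
    rw [heq] at hinv
    exact lis_mem_closure cs ω₂ (strong_exchange_left cs hrefl hinv)
  have hs : cs.simple i ∈ H₂ := by
    have hmono : Subgroup.closure {x : W | x ∈ cs.leftInvSeq ω₁} ≤ H₂ :=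
      (Subgroup.closure_le H₂).mpr (fun t ht => hlis t ht)
    exact hmono (simple_mem_closure_lis cs ω₁ hi)
  obtain ⟨δ, hδJ, hδprod⟩ := exists_word_of_mem_closure cs {l | l ∈ ω₂} hs
  obtain ⟨β, hβsub, hβred, hβprod⟩ := exists_reduced_sublist cs δ
  have hβs : cs.wordProd β = cs.simple i := by rw [hβprod, hδprod]
  have hβlen : β.length = 1 := by
    have := hβred
    rw [CoxeterSystem.IsReduced, hβs, cs.length_simple] at this
    omega
  obtain ⟨l, rfl⟩ := List.length_eq_one_iff.mp hβlen
  have hl : cs.simple l = cs.simple i := by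
    rw [← cs.wordProd_singleton l, hβs]
  have : l = i := simple_injective cs hl
  subst this
  exact hδJ l (hβsub.subset (List.mem_singleton_self l))

end PaperAux

namespace Paper
open List

variable {B W : Type*} [DecidableEq B] [Group W] {M : CoxeterMatrix B}

lemma supp_eq (cs : CoxeterSystem M W) {ω : List B} {w : W}
    (hred : cs.IsReduced ω) (hw : cs.wordProd ω = w) :
    Supp cs w = {i | i ∈ ω} := by
  ext i
  constructor
  · rintro ⟨ρ, ⟨hρprod, hρlen⟩, hiρ⟩
    have hρred : cs.IsReduced ρ := by
      rw [CoxeterSystem.IsReduced, hρprod, ← hρlen]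
    exact PaperAux.mem_of_mem_reduced cs hρred hred (by rw [hρprod, hw]) hiρ
  · intro hi
    refine ⟨ω, ⟨hw, ?_⟩, hi⟩
    have := hred
    rw [CoxeterSystem.IsReduced, hw] at this
    exact this.symm


/-- If `w` is boolean (`ℓ(w) = |supp(w)|`) and `u ≤ w` in Bruhat order, then `u` is boolean. -/
theorem stmt2 (cs : CoxeterSystem M W) (u w : W)
    (hw : cs.length w = (Supp cs w).ncard) (hle : BruhatLE cs u w) :
    cs.length u = (Supp cs u).ncard := by
  obtain ⟨ω, ω', ⟨hωprod, hωlen⟩, hsub, hω'prod⟩ := hle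
  have hωred : cs.IsReduced ω := by
    rw [CoxeterSystem.IsReduced, hωprod, ← hωlen]
  have hsupp : Supp cs w = {i | i ∈ ω} := supp_eq cs hωred hωprod
  have hset : {i | i ∈ ω} = (ω.toFinset : Set B) := by ext j; simp
  have hkey : ω.toFinset.card = ω.length := by
    have : cs.length w = ω.toFinset.card := by
      rw [hw, hsupp, hset, Set.ncard_coe_finset]
    omega
  have hnodup : ω.Nodup := by
    have hd : ω.dedup.length = ω.length := by
      rw [← List.card_toFinset]; exact hkey
    have heq : ω.dedup = ω := ω.dedup_sublist.eq_of_length hd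
    rw [← heq]; exact ω.nodup_dedup
  have hnodup' : ω'.Nodup := hnodup.sublist hsub
  obtain ⟨ω'', hsub'', hred'', hprod''⟩ := PaperAux.exists_reduced_sublist cs ω'
  have hnodup'' : ω''.Nodup := hnodup'.sublist hsub''
  have hprodu : cs.wordProd ω'' = u := by rw [hprod'', hω'prod]
  have hsuppu : Supp cs u = {i | i ∈ ω''} := supp_eq cs hred'' hprodu
  have hsetu : {i | i ∈ ω''} = (ω''.toFinset : Set B) := by ext j; simp
  rw [hsuppu, hsetu, Set.ncard_coe_finset, List.toFinset_card_of_nodup hnodup'']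
  rw [← hprodu] at *
  exact hred''


end Paper
end
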